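/- Let f ∈ ℤ[x] be a b-reciprocal polynomial of degree 2n with associated polynomial g of degree n, and let √b ∈ ℂ denote a fixed square root of b. Then disc(f) = b^{n(n−1)} · g(2√b) · g(−2√b) · (disc g)². Equivalently, writing g = Σ_{i=0}^n c_i u^i, X = Σ_{0≤2i≤n} c_{2i}(4b)^i and Y = Σ_{0≤2i+1≤n} c_{2i+1}(4b)^i, one has disc(f) = b^{n(n−1)} · (X² − 4bY²) · (disc g)². -/

import Mathlib

open Polynomial

/-- The discriminant of a complex polynomial `p` of degree `d` with leading coefficient `a`
and roots `r₁, …, r_d` (with multiplicity):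
`disc p = (-1)^(d(d-1)/2) · a^(2d-2) · ∏_{i ≠ j} (rᵢ - rⱼ) = a^(2d-2) · ∏_{i < j} (rᵢ - rⱼ)²`. -/
noncomputable def discC (p : Polynomial ℂ) : ℂ :=
  (-1 : ℂ) ^ (p.natDegree * (p.natDegree - 1) / 2) *
    p.leadingCoeff ^ (2 * p.natDegree - 2) *
    ∏ ij ∈ Finset.univ.filter
        (fun ij : Fin p.roots.toList.length × Fin p.roots.toList.length => ij.1 ≠ ij.2),
      (p.roots.toList.get ij.1 - p.roots.toList.get ij.2)

/-- The `b`-reciprocal polynomial `f(x) = xⁿ·g(x + b/x) = Σ cᵢ x^(n-i) (x² + b)^i` associated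
to `g(u) = Σ cᵢ uⁱ`. -/
noncomputable def expandPoly (n : ℕ) (b : ℤ) (g : Polynomial ℤ) : Polynomial ℤ :=
  ∑ i ∈ Finset.range (n + 1), C (g.coeff i) * X ^ (n - i) * (X ^ 2 + C b) ^ i

noncomputable def Dl (L : List ℂ) : ℂ :=
  ∏ ij ∈ Finset.univ.filter
      (fun ij : Fin L.length × Fin L.length => ij.1 ≠ ij.2),
    (L.get ij.1 - L.get ij.2)

lemma list_prod_map_eq_fin (f : ℂ → ℂ) (t : List ℂ) :
    (t.map f).prod = ∏ i : Fin t.length, f (t.get i) := by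
  induction t with
  | nil => simp
  | cons a t ih =>
    rw [List.map_cons, List.prod_cons, ih]
    simp only [List.length_cons]
    rw [Fin.prod_univ_succ]
    simp [List.get_cons_succ']

lemma Dl_cons (x : ℂ) (t : List ℂ) :
    Dl (x :: t) = (t.map (fun y => (x - y) * (y - x))).prod * Dl t := by
  rw [Dl, Dl, Finset.prod_filter, Finset.prod_filter,
    Fintype.prod_prod_type, Fintype.prod_prod_type]
  simp only [List.length_cons]
  rw [Fin.prod_univ_succ]
  simp only [Fin.prod_univ_succ]
  simp only [Fin.succ_ne_zero, (Fin.succ_ne_zero _).symm, Fin.succ_inj, ne_eq,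
    not_true, not_false_iff, if_true, if_false, ite_not, List.get_cons_zero,
    List.get_cons_succ', ite_true, ite_false, one_mul]
  rw [Finset.prod_mul_distrib, list_prod_map_eq_fin (fun y => (x - y) * (y - x)),
    Finset.prod_mul_distrib]
  ring

lemma Dl_nil : Dl [] = 1 := by
  simp [Dl]

lemma Dl_perm : ∀ {l l' : List ℂ}, l.Perm l' → Dl l = Dl l' := by
  intro l l' h
  induction h with
  | nil => rfl
  | cons a h ih => rw [Dl_cons, Dl_cons, ih, (h.map _).prod_eq]
  | swap a b l =>
    rw [Dl_cons, Dl_cons, Dl_cons, Dl_cons]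
    simp only [List.map_cons, List.prod_cons]
    ring
  | trans _ _ ih1 ih2 => rw [ih1, ih2]

lemma list_prod_map_mul (f g : ℂ → ℂ) (t : List ℂ) :
    (t.map fun y => f y * g y).prod = (t.map f).prod * (t.map g).prod := by
  induction t with
  | nil => simp
  | cons a t ih => simp [ih]; ring

lemma prod_bind_pair (A : ℂ → ℂ) (h : ℂ → ℂ) (t : List ℂ) :
    ((t.flatMap fun β => [A β, β - A β]).map h).prod
      = (t.map fun β => h (A β) * h (β - A β)).prod := by
  induction t with
  | nil => simp
  | cons a t ih => simp [List.flatMap_cons, ih]; ring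

lemma list_prod_map_mul3 (f g h : ℂ → ℂ) (t : List ℂ) :
    (t.map fun y => f y * g y * h y).prod = (t.map f).prod * ((t.map g).prod * (t.map h).prod) := by
  induction t with
  | nil => simp
  | cons a t ih => simp [ih]; ring

lemma list_prod_map_const_mul (c : ℂ) (h : ℂ → ℂ) (t : List ℂ) :
    (t.map fun y => c * h y).prod = c ^ t.length * (t.map h).prod := by
  induction t with
  | nil => simp
  | cons a t ih => simp [ih, pow_succ]; ring

lemma list_prod_map_sq (h : ℂ → ℂ) (t : List ℂ) :
    (t.map fun y => h y ^ 2).prod = (t.map h).prod ^ 2 := by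
  induction t with
  | nil => simp
  | cons a t ih => simp [ih, mul_pow]

lemma Dl_bind (bC : ℂ) (A : ℂ → ℂ) (hA : ∀ β, A β * (β - A β) = bC) (l : List ℂ) :
    Dl (l.flatMap fun β => [A β, β - A β])
      = (-1 : ℂ) ^ l.length * (l.map fun β => β ^ 2 - 4 * bC).prod
          * bC ^ (l.length * (l.length - 1)) * (Dl l) ^ 2 := by
  induction l with
  | nil => simp [Dl_nil]
  | cons β t ih =>
    have hlen : ∀ (m : ℕ), (m + 1) * m = m * (m - 1) + 2 * m := by
      intro m; cases m with
      | zero => rfl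
      | succ k => simp [Nat.succ_sub_one]; ring
    set u := A β with hu
    have huβ : u * (β - u) = bC := hA β
    have hbind : ((β :: t).flatMap fun γ => [A γ, γ - A γ])
        = u :: (β - u) :: (t.flatMap fun γ => [A γ, γ - A γ]) := by
      simp [List.flatMap_cons, hu]
    rw [hbind, Dl_cons, Dl_cons, List.map_cons, List.prod_cons]
    rw [prod_bind_pair, prod_bind_pair]
    -- head factor
    have hhead : (u - (β - u)) * (β - u - u) = 4 * bC - β ^ 2 := by
      linear_combination 4 * huβ
    rw [hhead]
    -- combine the two cross maps with the f₂-inner structure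
    rw [show (t.map fun γ => (u - A γ) * (A γ - u) * ((u - (γ - A γ)) * (γ - A γ - u))).prod
        = (t.map fun γ => (u - A γ) * (A γ - u)).prod
            * ((t.map fun γ => (u - (γ - A γ)) * (γ - A γ - u)).prod * (t.map fun _ => (1:ℂ)).prod)
        from by rw [← list_prod_map_mul3]; simp]
    have hcross : (t.map fun γ => (u - A γ) * (A γ - u)).prod
          * ((t.map fun γ => (u - (γ - A γ)) * (γ - A γ - u)).prod
            * (t.map fun γ => (β - u - A γ) * (A γ - (β - u))
                * ((β - u - (γ - A γ)) * (γ - A γ - (β - u)))).prod)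
        = bC ^ (2 * t.length) * ((t.map fun γ => (β - γ) * (γ - β)).prod) ^ 2 := by
      rw [← list_prod_map_mul3]
      have : (t.map fun γ => (u - A γ) * (A γ - u) * ((u - (γ - A γ)) * (γ - A γ - u))
            * ((β - u - A γ) * (A γ - (β - u)) * ((β - u - (γ - A γ)) * (γ - A γ - (β - u))))).prod
          = (t.map fun γ => bC ^ 2 * (((β - γ) * (γ - β)) ^ 2)).prod := by
        congr 1
        apply List.map_congr_left
        intro γ _
        set v := A γ with hv
        have hvγ : v * (γ - v) = bC := hA γ
        have hQ1 : (u - v) * (u - (γ - v)) = (β - γ) * u := by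
          linear_combination hvγ - huβ
        have hQ2 : (β - u - v) * (β - u - (γ - v)) = (β - γ) * (β - u) := by
          linear_combination hvγ - huβ
        have hF : (u - v) * (v - u) * ((u - (γ - v)) * (γ - v - u))
              * ((β - u - v) * (v - (β - u)) * ((β - u - (γ - v)) * (γ - v - (β - u))))
            = ((u - v) * (u - (γ - v)) * ((β - u - v) * (β - u - (γ - v)))) ^ 2 := by
          ring
        rw [hF, hQ1, hQ2, ← huβ]
        ring
      rw [this]
      rw [list_prod_map_const_mul, list_prod_map_sq, pow_mul]
    rw [show (t.map fun _ => (1:ℂ)).prod = 1 from by simp]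
    rw [List.length_cons, List.map_cons, List.prod_cons, Dl_cons, ih]
    rw [Nat.add_sub_cancel, hlen t.length, pow_add, pow_succ]
    linear_combination ((4 * bC - β ^ 2) * ((-1:ℂ) ^ t.length
        * (List.map (fun γ => γ ^ 2 - 4 * bC) t).prod
        * bC ^ (t.length * (t.length - 1)) * Dl t ^ 2)) * hcross

lemma discC_spec (p : Polynomial ℂ) :
    (-1 : ℂ) ^ (p.natDegree * (p.natDegree - 1) / 2) *
    p.leadingCoeff ^ (2 * p.natDegree - 2) *
    (∏ ij ∈ Finset.univ.filter
        (fun ij : Fin p.roots.toList.length × Fin p.roots.toList.length => ij.1 ≠ ij.2),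
      (p.roots.toList.get ij.1 - p.roots.toList.get ij.2))
    = (-1 : ℂ) ^ (p.natDegree * (p.natDegree - 1) / 2) *
        p.leadingCoeff ^ (2 * p.natDegree - 2) * Dl p.roots.toList := rfl

lemma sum_range_parity (f : ℕ → ℂ) (m : ℕ) :
    ∑ i ∈ Finset.range m, f i
      = ∑ i ∈ Finset.range ((m + 1) / 2), f (2 * i)
        + ∑ i ∈ Finset.range (m / 2), f (2 * i + 1) := by
  induction m with
  | zero => simp
  | succ k ih =>
    rcases Nat.even_or_odd k with ⟨j, hj⟩ | ⟨j, hj⟩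
    · subst hj
      rw [Finset.sum_range_succ, ih,
        show (j + j + 1 + 1) / 2 = (j + j + 1) / 2 + 1 by omega,
        Finset.sum_range_succ,
        show 2 * ((j + j + 1) / 2) = j + j by omega,
        show (j + j + 1) / 2 = (j + j) / 2 by omega]
      ring
    · subst hj
      rw [Finset.sum_range_succ, ih,
        show (2 * j + 1 + 1 + 1) / 2 = (2 * j + 1) / 2 + 1 by omega,
        show (2 * j + 1 + 1) / 2 = (2 * j + 1) / 2 + 1 by omega,
        Finset.sum_range_succ (fun i => f (2 * i + 1)) ((2 * j + 1) / 2),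
        show 2 * ((2 * j + 1) / 2) + 1 = 2 * j + 1 by omega]
      ring

lemma length_bind_pair (A : ℂ → ℂ) (l : List ℂ) :
    (l.flatMap fun β => [A β, β - A β]).length = 2 * l.length := by
  induction l with
  | nil => simp
  | cons a t ih => simp [List.flatMap_cons, ih]; ring

theorem disc_bReciprocal (n : ℕ) (hn : 1 ≤ n) (b : ℤ) (hb : b ≠ 0)
    (g f : Polynomial ℤ) (hg : g.degree = (n : ℕ)) (hf : f = expandPoly n b g)
    (s : ℂ) (hs : s ^ 2 = (b : ℂ)) :
    discC (f.map (Int.castRingHom ℂ)) =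
      (b : ℂ) ^ (n * (n - 1)) *
        ((g.map (Int.castRingHom ℂ)).eval (2 * s) * (g.map (Int.castRingHom ℂ)).eval (-2 * s)) *
        discC (g.map (Int.castRingHom ℂ)) ^ 2 ∧
    discC (f.map (Int.castRingHom ℂ)) =
      (b : ℂ) ^ (n * (n - 1)) *
        (((∑ i ∈ Finset.range (n / 2 + 1), g.coeff (2 * i) * (4 * b) ^ i : ℤ) : ℂ) ^ 2
          - 4 * (b : ℂ) *
            ((∑ i ∈ Finset.range ((n - 1) / 2 + 1), g.coeff (2 * i + 1) * (4 * b) ^ i : ℤ) : ℂ) ^ 2) *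
        discC (g.map (Int.castRingHom ℂ)) ^ 2 := by
  set bC : ℂ := (b : ℂ) with hbCdef
  have hbC : bC ≠ 0 := by
    simpa [hbCdef] using hb
  set G : Polynomial ℂ := g.map (Int.castRingHom ℂ) with hGdef
  set F : Polynomial ℂ := f.map (Int.castRingHom ℂ) with hFdef
  have hGdeg : G.degree = (n : ℕ) := by
    rw [hGdef, degree_map_eq_of_injective (fun x y => by simp), hg]
  have hGnd : G.natDegree = n := natDegree_eq_of_degree_eq_some hGdeg
  have hGne : G ≠ 0 := fun h => by simp [h] at hGdeg
  set c : ℂ := G.leadingCoeff with hcdef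
  have hc : c ≠ 0 := leadingCoeff_ne_zero.mpr hGne
  have hcard : Multiset.card G.roots = n := by
    rw [← hGnd]
    exact (splits_iff_card_roots).1 (IsAlgClosed.splits G)
  set LG : List ℂ := G.roots.toList with hLGdef
  have hLGlen : LG.length = n := by
    rw [hLGdef, Multiset.length_toList, hcard]
  have hLGcoe : (↑LG : Multiset ℂ) = G.roots := Multiset.coe_toList _
  have hGfact : C c * (G.roots.map fun a => X - C a).prod = G :=
    C_leadingCoeff_mul_prod_multiset_X_sub_C (by rw [hcard, hGnd])
  have hGeval : ∀ y : ℂ, G.eval y = c * (LG.map fun β => y - β).prod := by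
    intro y
    rw [← hGfact, ← hLGcoe]
    rw [Multiset.map_coe, Multiset.prod_coe]
    simp [eval_list_prod, List.map_map, Function.comp_def]
  -- the root-choice function for the quadratics x² - βx + b
  have hex : ∀ β : ℂ, ∃ α : ℂ, α * (β - α) = bC := by
    intro β
    obtain ⟨z, hz⟩ := IsAlgClosed.exists_pow_nat_eq (k := ℂ) (β ^ 2 - 4 * bC) (n := 2)
      (by norm_num)
    exact ⟨(β + z) / 2, by linear_combination (-1/4 : ℂ) * hz⟩
  set A : ℂ → ℂ := fun β => (hex β).choose with hAdef
  have hA : ∀ β, A β * (β - A β) = bC := fun β => (hex β).choose_spec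
  set LF : List ℂ := LG.flatMap fun β => [A β, β - A β] with hLFdef
  have hLFlen : LF.length = 2 * n := by rw [hLFdef, length_bind_pair, hLGlen]
  have hcc : ∀ i, G.coeff i = ((g.coeff i : ℤ) : ℂ) := by
    intro i
    rw [hGdef, coeff_map]
    simp
  have hccn : ((g.coeff n : ℤ) : ℂ) = c := by
    rw [hcdef, Polynomial.leadingCoeff, hGnd, hcc n]
  have hFx : ∀ x : ℂ, F.eval x
      = ∑ i ∈ Finset.range (n + 1), ((g.coeff i : ℤ) : ℂ) * x ^ (n - i) * (x ^ 2 + bC) ^ i := by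
    intro x
    rw [hFdef, hf]
    simp [expandPoly, eval_map, eval₂_finset_sum, eval₂_mul, eval₂_pow, eval₂_add, eval₂_C,
      eval₂_X, hbCdef]
    norm_num [eval₂_eq_eval_map]
  have key : ∀ x : ℂ, (∑ i ∈ Finset.range (n + 1), ((g.coeff i : ℤ) : ℂ) * x ^ (n - i) * (x ^ 2 + bC) ^ i)
      = c * (LG.map fun β => x ^ 2 - β * x + bC).prod := by
    intro x
    rcases eq_or_ne x 0 with rfl | hx
    · rw [Finset.sum_eq_single n]
      · rw [show (List.map (fun β => (0:ℂ) ^ 2 - β * 0 + bC) LG) = LG.map (fun _ => bC * 1) from by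
            apply List.map_congr_left; intro β _; ring,
          list_prod_map_const_mul, hLGlen]
        simp [hccn]
      · intro i hi hine
        rw [zero_pow (Nat.sub_ne_zero_of_lt (lt_of_le_of_ne (Nat.lt_succ_iff.mp (Finset.mem_range.mp hi)) hine))]
        ring
      · intro h; exact absurd (Finset.self_mem_range_succ n) h
    · set u : ℂ := x + bC / x with hudef
      have hxu : x * u = x ^ 2 + bC := by
        rw [hudef, mul_add, mul_div_cancel₀ bC hx]
        ring
      have hterm : ∀ i ∈ Finset.range (n + 1),
          ((g.coeff i : ℤ) : ℂ) * x ^ (n - i) * (x ^ 2 + bC) ^ i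
            = x ^ n * (((g.coeff i : ℤ) : ℂ) * u ^ i) := by
        intro i hi
        rw [← hxu, mul_pow,
          show ((g.coeff i : ℤ) : ℂ) * x ^ (n - i) * (x ^ i * u ^ i)
              = x ^ (n - i) * x ^ i * (((g.coeff i : ℤ) : ℂ) * u ^ i) from by ring,
          ← pow_add, Nat.sub_add_cancel (Nat.lt_succ_iff.mp (Finset.mem_range.mp hi))]
      rw [Finset.sum_congr rfl hterm, ← Finset.mul_sum]
      have hGu : G.eval u = ∑ i ∈ Finset.range (n + 1), ((g.coeff i : ℤ) : ℂ) * u ^ i := by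
        rw [eval_eq_sum_range, hGnd]
        exact Finset.sum_congr rfl fun i _ => by rw [hcc]
      rw [← hGu, hGeval u]
      rw [show (LG.map fun β => x ^ 2 - β * x + bC) = LG.map fun β => x * (u - β) from by
          apply List.map_congr_left; intro β _; linear_combination -hxu,
        list_prod_map_const_mul, hLGlen]
      ring
  have hRx : ∀ x : ℂ, (C c * (LF.map fun r => X - C r).prod).eval x
      = c * (LG.map fun β => x ^ 2 - β * x + bC).prod := by
    intro x
    rw [eval_mul, eval_C, eval_list_prod, List.map_map]
    rw [show (eval x ∘ fun r : ℂ => X - C r) = fun r : ℂ => x - r from by funext r; simp]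
    rw [hLFdef, prod_bind_pair]
    congr 2
    apply List.map_congr_left
    intro β _
    linear_combination hA β
  have hFfactL : F = C c * (LF.map fun r => X - C r).prod :=
    Polynomial.funext fun x => by rw [hFx x, key x, hRx x]
  have hFfact : F = C c * (((LF : Multiset ℂ)).map fun r => X - C r).prod := by
    rw [hFfactL, Multiset.map_coe, Multiset.prod_coe]
  have hmonic : (((LF : Multiset ℂ)).map fun r => X - C r).prod.Monic :=
    monic_multiset_prod_of_monic _ _ fun r _ => monic_X_sub_C r
  have hFroots : F.roots = (LF : Multiset ℂ) := by
    rw [hFfact, roots_C_mul _ hc, roots_multiset_prod_X_sub_C]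
  have hFnd : F.natDegree = 2 * n := by
    rw [hFfact, natDegree_C_mul hc, natDegree_multiset_prod_X_sub_C_eq_card,
      Multiset.coe_card, hLFlen]
  have hFlc : F.leadingCoeff = c := by
    rw [hFfact, leadingCoeff_mul, leadingCoeff_C, hmonic.leadingCoeff, mul_one]
  have hDlF : Dl F.roots.toList = Dl LF :=
    Dl_perm (Multiset.coe_eq_coe.mp (by rw [Multiset.coe_toList, hFroots]))
  have hdiscF : discC F = (-1 : ℂ) ^ (n * (2 * n - 1)) * c ^ (4 * n - 2) * Dl LF := by
    rw [show discC F = (-1 : ℂ) ^ (F.natDegree * (F.natDegree - 1) / 2)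
          * F.leadingCoeff ^ (2 * F.natDegree - 2) * Dl F.roots.toList from rfl,
      hFnd, hFlc, hDlF,
      show 2 * n * (2 * n - 1) / 2 = n * (2 * n - 1) from by
        rw [show 2 * n * (2 * n - 1) = 2 * (n * (2 * n - 1)) from by ring]
        exact Nat.mul_div_cancel_left _ (by norm_num),
      show 2 * (2 * n) - 2 = 4 * n - 2 from by omega]
  have hdiscG : discC G = (-1 : ℂ) ^ (n * (n - 1) / 2) * c ^ (2 * n - 2) * Dl LG := by
    rw [show discC G = (-1 : ℂ) ^ (G.natDegree * (G.natDegree - 1) / 2)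
          * G.leadingCoeff ^ (2 * G.natDegree - 2) * Dl G.roots.toList from rfl,
      hGnd, ← hcdef, ← hLGdef]
  set Pi : ℂ := (LG.map fun β => β ^ 2 - 4 * bC).prod with hPidef
  have hDlLF : Dl LF = (-1 : ℂ) ^ n * Pi * bC ^ (n * (n - 1)) * (Dl LG) ^ 2 := by
    rw [hLFdef, Dl_bind bC A hA, hLGlen, hPidef]
  have hGevals : G.eval (2 * s) * G.eval (-2 * s) = c ^ 2 * Pi := by
    rw [hGeval, hGeval, hPidef,
      show (LG.map fun β => β ^ 2 - 4 * bC) = LG.map fun β => (2 * s - β) * (-2 * s - β) from by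
        apply List.map_congr_left; intro β _; linear_combination 4 * hs,
      list_prod_map_mul]
    ring
  have e2 : ((-1 : ℂ)) ^ (n * (2 * n - 1)) * (-1) ^ n = 1 := by
    rw [← pow_add]
    obtain ⟨m, rfl⟩ : ∃ m, n = m + 1 := ⟨n - 1, by omega⟩
    rw [show (m + 1) * (2 * (m + 1) - 1) + (m + 1) = 2 * ((m + 1) * (m + 1)) from by
        rw [show 2 * (m + 1) - 1 = 2 * m + 1 from by omega]; ring,
      pow_mul]
    simp
  have e1 : ((-1 : ℂ) ^ (n * (n - 1) / 2)) ^ 2 = 1 := by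
    rw [← pow_mul, mul_comm, pow_mul]
    simp
  have e3 : (c ^ (2 * n - 2)) ^ 2 = c ^ (4 * n - 4) := by
    rw [← pow_mul]
    congr 1
    omega
  have main1 : discC F = bC ^ (n * (n - 1)) * (G.eval (2 * s) * G.eval (-2 * s)) * discC G ^ 2 := by
    rw [hdiscF, hdiscG, hDlLF, hGevals, mul_pow, mul_pow, e1, e3]
    rw [show (-1 : ℂ) ^ (n * (2 * n - 1)) * c ^ (4 * n - 2)
          * ((-1) ^ n * Pi * bC ^ (n * (n - 1)) * Dl LG ^ 2)
        = ((-1 : ℂ) ^ (n * (2 * n - 1)) * (-1) ^ n)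
          * (c ^ (4 * n - 2) * Pi * bC ^ (n * (n - 1)) * Dl LG ^ 2) from by ring,
      e2, one_mul,
      show bC ^ (n * (n - 1)) * (c ^ 2 * Pi) * (1 * c ^ (4 * n - 4) * Dl LG ^ 2)
          = c ^ 2 * c ^ (4 * n - 4) * Pi * bC ^ (n * (n - 1)) * Dl LG ^ 2 from by ring,
      ← pow_add, show 2 + (4 * n - 4) = 4 * n - 2 from by omega]
  refine ⟨main1, ?_⟩
  have hsq : (2 * s) ^ 2 = 4 * bC := by linear_combination 4 * hs
  have hsq' : (-2 * s) ^ 2 = 4 * bC := by linear_combination 4 * hs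
  have hXSval : ((∑ i ∈ Finset.range (n / 2 + 1), g.coeff (2 * i) * (4 * b) ^ i : ℤ) : ℂ)
      = ∑ i ∈ Finset.range (n / 2 + 1), ((g.coeff (2 * i) : ℤ) : ℂ) * (4 * bC) ^ i := by
    rw [hbCdef]; push_cast; ring
  have hYSval : ((∑ i ∈ Finset.range ((n - 1) / 2 + 1), g.coeff (2 * i + 1) * (4 * b) ^ i : ℤ) : ℂ)
      = ∑ i ∈ Finset.range ((n - 1) / 2 + 1), ((g.coeff (2 * i + 1) : ℤ) : ℂ) * (4 * bC) ^ i := by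
    rw [hbCdef]; push_cast; ring
  have h2s : G.eval (2 * s)
      = (∑ i ∈ Finset.range (n / 2 + 1), ((g.coeff (2 * i) : ℤ) : ℂ) * (4 * bC) ^ i)
        + (∑ i ∈ Finset.range ((n - 1) / 2 + 1), ((g.coeff (2 * i + 1) : ℤ) : ℂ) * (4 * bC) ^ i)
          * (2 * s) := by
    rw [eval_eq_sum_range, hGnd, sum_range_parity (fun i => G.coeff i * (2 * s) ^ i) (n + 1),
      show (n + 1 + 1) / 2 = n / 2 + 1 from by omega,
      show (n + 1) / 2 = (n - 1) / 2 + 1 from by omega,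
      Finset.sum_mul]
    congr 1
    · exact Finset.sum_congr rfl fun i _ => by rw [hcc, pow_mul, hsq]
    · exact Finset.sum_congr rfl fun i _ => by rw [hcc, pow_succ, pow_mul, hsq]; ring
  have h2s' : G.eval (-2 * s)
      = (∑ i ∈ Finset.range (n / 2 + 1), ((g.coeff (2 * i) : ℤ) : ℂ) * (4 * bC) ^ i)
        + (∑ i ∈ Finset.range ((n - 1) / 2 + 1), ((g.coeff (2 * i + 1) : ℤ) : ℂ) * (4 * bC) ^ i)
          * (-2 * s) := by
    rw [eval_eq_sum_range, hGnd, sum_range_parity (fun i => G.coeff i * (-2 * s) ^ i) (n + 1),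
      show (n + 1 + 1) / 2 = n / 2 + 1 from by omega,
      show (n + 1) / 2 = (n - 1) / 2 + 1 from by omega,
      Finset.sum_mul]
    congr 1
    · exact Finset.sum_congr rfl fun i _ => by rw [hcc, pow_mul, hsq']
    · exact Finset.sum_congr rfl fun i _ => by rw [hcc, pow_succ, pow_mul, hsq']; ring
  have hXY : G.eval (2 * s) * G.eval (-2 * s)
      = ((∑ i ∈ Finset.range (n / 2 + 1), g.coeff (2 * i) * (4 * b) ^ i : ℤ) : ℂ) ^ 2
        - 4 * bC *
          ((∑ i ∈ Finset.range ((n - 1) / 2 + 1), g.coeff (2 * i + 1) * (4 * b) ^ i : ℤ) : ℂ) ^ 2 := by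
    rw [h2s, h2s', hXSval, hYSval]
    linear_combination (-4 * (∑ i ∈ Finset.range ((n - 1) / 2 + 1),
      ((g.coeff (2 * i + 1) : ℤ) : ℂ) * (4 * bC) ^ i) ^ 2) * hs
  rw [main1, hXY]
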